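/- Let I₁, …, Iₙ be closed intervals in ℝ, each of length at most 2, whose union is an interval [a, b], and suppose the family is minimal (no proper subfamily covers [a, b]). Order them by their left endpoints, with Aᵢ, Bᵢ the left and right endpoints of Iᵢ, and set M₀ = A₁, Mₙ = Bₙ, and Mᵢ = (A_{i+1} + Bᵢ)/2 for 0 < i < n. Then Mᵢ − M_{i−1} ≥ (Bᵢ − Aᵢ)/2 for all 1 ≤ i ≤ n. -/

import Mathlib

theorem stmt_15 (n : ℕ) (hn : 0 < n) (a b : ℝ) (A B : ℕ → ℝ)
    (hAB : ∀ i < n, A i ≤ B i)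
    (hlen : ∀ i < n, B i - A i ≤ 2)
    (hcover : (⋃ i ∈ Finset.range n, Set.Icc (A i) (B i)) = Set.Icc a b)
    (hmin : ∀ i < n, ¬ (Set.Icc a b ⊆ ⋃ j ∈ Finset.range n \ {i}, Set.Icc (A j) (B j)))
    (horder : ∀ i j, i ≤ j → j < n → A i ≤ A j)
    (M : ℕ → ℝ)
    (hM0 : M 0 = A 0) (hMn : M n = B (n - 1))
    (hMi : ∀ i, 0 < i → i < n → M i = (A i + B (i - 1)) / 2) :
    ∀ i, 1 ≤ i → i ≤ n → M i - M (i - 1) ≥ (B (i - 1) - A (i - 1)) / 2 := by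
  -- redundancy: no interval is contained in the union of the others
  have hred : ∀ k < n, ¬ (Set.Icc (A k) (B k) ⊆
      ⋃ j ∈ Finset.range n \ ({k} : Finset ℕ), Set.Icc (A j) (B j)) := by
    intro k hk hsub
    apply hmin k hk
    intro x hx
    rw [← hcover] at hx
    simp only [Set.mem_iUnion, Finset.mem_range, Finset.mem_sdiff,
      Finset.mem_singleton, exists_prop] at hx ⊢
    obtain ⟨j, hj, hxj⟩ := hx
    by_cases hjk : j = k
    · subst hjk
      have := hsub hxj
      simp only [Set.mem_iUnion, Finset.mem_range, Finset.mem_sdiff,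
        Finset.mem_singleton, exists_prop] at this
      exact this
    · exact ⟨j, ⟨hj, hjk⟩, hxj⟩
  have hBmono : ∀ j, 0 < j → j < n → B (j - 1) ≤ B j := by
    intro j hj0 hjn
    by_contra h
    push_neg at h
    apply hred j hjn
    intro x hx
    simp only [Set.mem_iUnion, Finset.mem_range, Finset.mem_sdiff,
      Finset.mem_singleton, exists_prop]
    refine ⟨j - 1, ⟨by omega, by omega⟩, ?_, ?_⟩
    · exact le_trans (horder (j - 1) j (by omega) hjn) hx.1
    · exact le_trans hx.2 h.le
  have hAgap : ∀ i, 2 ≤ i → i < n → B (i - 2) ≤ A i := by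
    intro i h2 hin
    by_contra h
    push_neg at h
    apply hred (i - 1) (by omega)
    intro x hx
    simp only [Set.mem_iUnion, Finset.mem_range, Finset.mem_sdiff,
      Finset.mem_singleton, exists_prop]
    rcases le_or_gt x (B (i - 2)) with hc | hc
    · refine ⟨i - 2, ⟨by omega, by omega⟩, ?_, hc⟩
      exact le_trans (horder (i - 2) (i - 1) (by omega) (by omega)) hx.1
    · refine ⟨i, ⟨hin, by omega⟩, le_trans h.le hc.le, ?_⟩
      have hB : B (i - 1) ≤ B i := by
        have := hBmono i (by omega) hin
        exact this
      exact le_trans hx.2 hB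
  intro i h1 hin
  by_cases hieq : i = n
  · subst hieq
    rcases eq_or_lt_of_le (Nat.succ_le_of_lt hn) with h1n | h1n
    · -- i = 1
      have hn1 : i = 1 := h1n.symm
      subst hn1
      rw [hMn, hM0]
      have := hAB 0 (by omega)
      simp only [Nat.sub_self]
      linarith
    · -- i ≥ 2
      rw [hMn, hMi (i - 1) (by omega) (by omega)]
      have hB := hBmono (i - 1) (by omega) (by omega)
      linarith
  · have hilt : i < n := lt_of_le_of_ne hin hieq
    rw [hMi i (by omega) hilt]
    by_cases hi1 : i = 1
    · subst hi1
      rw [show (1 : ℕ) - 1 = 0 from rfl, hM0]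
      have hA := horder 0 1 (by omega) hilt
      linarith
    · have h2 : 2 ≤ i := by omega
      rw [hMi (i - 1) (by omega) (by omega), show i - 1 - 1 = i - 2 from by omega]
      have hA := hAgap i h2 hilt
      linarith
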